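/- Let g : A ⥤ C, f : A ⥤ B, h : C ⥤ B be functors and φ : f ⟶ g ⋙ h a natural transformation exhibiting h as a pointwise left Kan extension of f along g. Then for every category X and every functor c : X ⥤ C, writing g/c for the comma category Comma g c with projections p : g/c ⥤ A and q : g/c ⥤ X and canonical 2-cell λ : p ⋙ g ⟶ q ⋙ c, the pasted natural transformation p ⋙ f ⟶ q ⋙ c ⋙ h (the whiskering of φ with p followed by the whiskering of λ with h) exhibits c ⋙ h as a pointwise left Kan extension of p ⋙ f along q. -/

import Mathlib

open CategoryTheory

universe w v v₁ v₂ v₃ v₄ v₅ u u₁ u₂ u₃ u₄ u₅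

section Statement10

variable {A : Type u₁} {C : Type u₂} {B : Type u₃}
variable [Category.{v₁} A] [Category.{v₂} C] [Category.{v₃} B]

/-- The paste of `φ : f ⟶ g ⋙ h` with the comma square for `g/c`: the whiskering of `φ`
with `p : g/c ⥤ A` followed by the whiskering of the canonical 2-cell
`λ : p ⋙ g ⟶ q ⋙ c` with `h`, giving `p ⋙ f ⟶ q ⋙ (c ⋙ h)`. -/
def commaWhisker {X : Type u₄} [Category.{v₄} X] (g : A ⥤ C) (c : X ⥤ C)
    (f : A ⥤ B) (h : C ⥤ B) (φ : f ⟶ g ⋙ h) :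
    Comma.fst g c ⋙ f ⟶ Comma.snd g c ⋙ (c ⋙ h) :=
  Functor.whiskerLeft (Comma.fst g c) φ ≫ Functor.whiskerRight (Comma.natTrans g c) h

variable {X : Type u₄} [Category.{v₄} X] (g : A ⥤ C) (c : X ⥤ C) (x : X)

/-- inclusion -/
@[simps]
def incl : CostructuredArrow g (c.obj x) ⥤ CostructuredArrow (Comma.snd g c) x where
  obj y := CostructuredArrow.mk (Y := Comma.mk y.left x y.hom) (𝟙 x)
  map {y y'} α := CostructuredArrow.homMk
    { left := α.left
      right := 𝟙 x
      w := by
        have hw : g.map α.left ≫ y'.hom = y.hom := by simpa using CostructuredArrow.w α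
        dsimp
        simp [hw] } (Category.comp_id _)

/-- left adjoint -/
@[simps]
def lad : CostructuredArrow (Comma.snd g c) x ⥤ CostructuredArrow g (c.obj x) where
  obj o := CostructuredArrow.mk (o.left.hom ≫ c.map o.hom)
  map {o o'} α := CostructuredArrow.homMk α.left.left (by
    have h1 := α.left.w
    have h2 : α.left.right ≫ o'.hom = o.hom := by simpa using CostructuredArrow.w α
    dsimp at h1 ⊢
    rw [← Category.assoc, h1, Category.assoc, ← c.map_comp, h2])
  map_id o := by ext; rfl
  map_comp α β := by ext; rfl

def ladAdj : lad g c x ⊣ incl g c x :=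
  Adjunction.mkOfHomEquiv
    { homEquiv := fun o y =>
        { toFun := fun β => CostructuredArrow.homMk
            { left := β.left
              right := o.hom
              w := by
                have h1 : g.map β.left ≫ y.hom = o.left.hom ≫ c.map o.hom := by
                  exact CostructuredArrow.w β
                exact h1 }
            (Category.comp_id _)
          invFun := fun α => CostructuredArrow.homMk α.left.left (by
            have h1 := α.left.w
            have h2 : α.left.right = o.hom := by simpa using (Category.comp_id α.left.right).symm.trans (CostructuredArrow.w α)
            rw [h2] at h1
            exact h1)
          left_inv := fun β => by ext; rfl
          right_inv := fun α => by
            have h2 : α.left.right = o.hom := by simpa using (Category.comp_id α.left.right).symm.trans (CostructuredArrow.w α)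
            ext
            · rfl
            · exact h2.symm }
      homEquiv_naturality_left_symm := by intros; ext; rfl
      homEquiv_naturality_right := by
        intros
        ext
        · rfl
        · exact (Category.comp_id _).symm }

instance : (incl g c x).Final := Functor.final_of_adjunction (ladAdj g c x)

/-- If `φ : f ⟶ g ⋙ h` exhibits `h` as a pointwise left Kan extension
of `f` along `g`, then for every category `X` and functor `c : X ⥤ C`, the pasted natural
transformation `p ⋙ f ⟶ q ⋙ (c ⋙ h)` obtained from the comma square for `g/c` exhibits
`c ⋙ h` as a pointwise left Kan extension of `p ⋙ f` along `q`. -/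
theorem stmt10 (g : A ⥤ C) (f : A ⥤ B) (h : C ⥤ B) (φ : f ⟶ g ⋙ h)
    (hφ : (Functor.LeftExtension.mk h φ).IsPointwiseLeftKanExtension)
    (X : Type u₄) [Category.{v₄} X] (c : X ⥤ C) :
    Nonempty (Functor.LeftExtension.mk (c ⋙ h)
      (commaWhisker g c f h φ)).IsPointwiseLeftKanExtension := by
  constructor
  intro x
  dsimp only [Functor.LeftExtension.IsPointwiseLeftKanExtensionAt]
  refine (Functor.Final.isColimitWhiskerEquiv (incl g c x) _) ?_
  refine (hφ (c.obj x)).ofIsoColimit (Limits.Cocones.ext (Iso.refl _) ?_)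
  intro j
  simp [commaWhisker, Functor.LeftExtension.coconeAt, incl]
  exact congrArg (_ ≫ ·) (CategoryTheory.Functor.map_id (c ⋙ h) x).symm

end Statement10
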